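/- Let m > n ≥ 3 be integers, let k ≥ 1 be a natural number, and let c₀ > 0. Then there exists a constant C > 0 such that for all real t > 0, d ≥ 0, and all reals X ≥ 1, Y ≥ 1: ∫_1^∞ e^{-t²/(8v)} · (t/√v)^k · [ v^{-n/2} X^{-(m-2)} Y^{-(m-2)} e^{-c₀(X²+Y²)/v} + v^{-m/2} e^{-c₀ d²/v} ] · dv/v ≤ C · t^{-n} X^{-(m-2)} Y^{-(m-2)} (t/(t+X+Y))^{n+k} + C · t^{-m} (t/(t+d))^{m+k}. -/

import Mathlib

open MeasureTheory Real Set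

lemma aux_lintegral (p s : ℝ) (hp : 0 < p) (hs : 0 < s) :
    ∫⁻ v in Set.Ioi (0:ℝ), ENNReal.ofReal (Real.exp (-(s / v)) * v ^ (-p - 1)) =
      ENNReal.ofReal ((1 / s) ^ p * Real.Gamma p) := by
  have hne : (-1 : ℝ) ≠ 0 := by norm_num
  set g : ℝ → ℝ := fun y => y ^ (p - 1) * Real.exp (-(s * y)) with hg
  have hgi : MeasureTheory.IntegrableOn g (Set.Ioi 0) := by
    have h := integrableOn_rpow_mul_exp_neg_mul_rpow (p := 1) (s := p - 1) (b := s)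
      (by linarith) one_pos hs
    refine h.congr_fun (fun x hx => ?_) measurableSet_Ioi
    simp [hg, Real.rpow_one, neg_mul]
  have key : ∀ x ∈ Set.Ioi (0:ℝ),
      (|(-1:ℝ)| * x ^ ((-1:ℝ) - 1)) • g (x ^ (-1:ℝ)) = Real.exp (-(s / x)) * x ^ (-p - 1) := by
    intro x hx
    have hx0 : (0:ℝ) < x := hx
    have h1 : (x ^ (-1:ℝ)) ^ (p - 1) = x ^ ((-1) * (p - 1)) := by
      rw [← Real.rpow_mul hx0.le]
    have h2 : s * x ^ (-1:ℝ) = s / x := by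
      rw [Real.rpow_neg_one, div_eq_mul_inv]
    have h3 : x ^ ((-1:ℝ) - 1) * x ^ ((-1:ℝ) * (p - 1)) = x ^ (-p - 1) := by
      rw [← Real.rpow_add hx0]; ring_nf
    calc (|(-1:ℝ)| * x ^ ((-1:ℝ) - 1)) • g (x ^ (-1:ℝ))
        = x ^ ((-1:ℝ) - 1) * ((x ^ (-1:ℝ)) ^ (p - 1) * Real.exp (-(s * x ^ (-1:ℝ)))) := by
          simp [hg, smul_eq_mul]
      _ = (x ^ ((-1:ℝ) - 1) * x ^ ((-1:ℝ) * (p - 1))) * Real.exp (-(s / x)) := by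
          rw [h1, h2]; ring
      _ = Real.exp (-(s / x)) * x ^ (-p - 1) := by rw [h3]; ring
  have hfi : MeasureTheory.IntegrableOn
      (fun v => Real.exp (-(s / v)) * v ^ (-p - 1)) (Set.Ioi 0) := by
    have h := (integrableOn_Ioi_comp_rpow_iff g hne).mpr hgi
    exact h.congr_fun (fun x hx => key x hx) measurableSet_Ioi
  have hint : ∫ v in Set.Ioi (0:ℝ), Real.exp (-(s / v)) * v ^ (-p - 1) =
      (1 / s) ^ p * Real.Gamma p := by
    rw [← Real.integral_rpow_mul_exp_neg_mul_Ioi hp hs, ← integral_comp_rpow_Ioi g hne]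
    exact setIntegral_congr_fun measurableSet_Ioi (fun x hx => (key x hx).symm)
  have hnn : 0 ≤ᵐ[MeasureTheory.volume.restrict (Set.Ioi (0:ℝ))]
      fun v => Real.exp (-(s / v)) * v ^ (-p - 1) := by
    filter_upwards [MeasureTheory.ae_restrict_mem measurableSet_Ioi] with x hx
    have hx0 : (0:ℝ) < x := hx
    positivity
  rw [← hint]
  exact (MeasureTheory.ofReal_integral_eq_lintegral_ofReal hfi hnn).symm

set_option maxHeartbeats 1000000 in
/-- Case 5 of Theorem 2.2: for integers `m > n ≥ 3`, `k ≥ 1` and `c₀ > 0` there is `C > 0`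
such that for all `t > 0`, `d ≥ 0`, `X, Y ≥ 1`,
`∫_1^∞ e^{-t²/(8v)} (t/√v)^k [v^{-n/2} X^{-(m-2)} Y^{-(m-2)} e^{-c₀(X²+Y²)/v}
 + v^{-m/2} e^{-c₀d²/v}] dv/v
 ≤ C t^{-n} X^{-(m-2)} Y^{-(m-2)} (t/(t+X+Y))^{n+k} + C t^{-m} (t/(t+d))^{m+k}`. -/
theorem poisson_case5_estimate (m n : ℕ) (hn : 3 ≤ n) (hmn : n < m)
    (k : ℕ) (hk : 1 ≤ k) (c₀ : ℝ) (hc₀ : 0 < c₀) :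
    ∃ C > 0, ∀ t d X Y : ℝ, 0 < t → 0 ≤ d → 1 ≤ X → 1 ≤ Y →
      ∫⁻ v in Set.Ioi (1 : ℝ),
          ENNReal.ofReal (Real.exp (-(t ^ 2 / (8 * v))) * (t / Real.sqrt v) ^ k *
            (v ^ (-(n : ℝ) / 2) * X ^ (-((m : ℝ) - 2)) * Y ^ (-((m : ℝ) - 2)) *
                Real.exp (-(c₀ * (X ^ 2 + Y ^ 2) / v)) +
              v ^ (-(m : ℝ) / 2) * Real.exp (-(c₀ * d ^ 2 / v))) / v) ≤
        ENNReal.ofReal (C * t ^ (-(n : ℝ)) * X ^ (-((m : ℝ) - 2)) * Y ^ (-((m : ℝ) - 2)) *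
            (t / (t + X + Y)) ^ (n + k) +
          C * t ^ (-(m : ℝ)) * (t / (t + d)) ^ (m + k)) := by
  set p₁ : ℝ := ((n : ℝ) + k) / 2 with hp₁def
  set p₂ : ℝ := ((m : ℝ) + k) / 2 with hp₂def
  have hp₁ : 0 < p₁ := by
    have : (3:ℝ) ≤ (n:ℝ) := by exact_mod_cast hn
    have : (0:ℝ) ≤ (k:ℝ) := by positivity
    rw [hp₁def]; positivity
  have hp₂ : 0 < p₂ := by
    have h3 : (3:ℝ) ≤ (n:ℝ) := by exact_mod_cast hn
    have hnm : (n:ℝ) ≤ (m:ℝ) := by exact_mod_cast hmn.le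
    have : (0:ℝ) ≤ (k:ℝ) := by positivity
    rw [hp₂def]; positivity
  set M : ℝ := max 8 c₀⁻¹ with hMdef
  have hM8 : (8:ℝ) ≤ M := le_max_left _ _
  have hMc : c₀⁻¹ ≤ M := le_max_right _ _
  have hM0 : 0 < M := lt_of_lt_of_le (by norm_num) hM8
  set K : ℝ := 3 * M with hKdef
  have hK0 : 0 < K := by rw [hKdef]; positivity
  have h1c : 1 ≤ M * c₀ := by
    have := mul_le_mul_of_nonneg_right hMc hc₀.le
    rwa [inv_mul_cancel₀ hc₀.ne'] at this
  set C : ℝ := Real.Gamma p₁ * K ^ p₁ + Real.Gamma p₂ * K ^ p₂ + 1 with hCdef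
  have hG₁ : 0 < Real.Gamma p₁ := Real.Gamma_pos_of_pos hp₁
  have hG₂ : 0 < Real.Gamma p₂ := Real.Gamma_pos_of_pos hp₂
  have hC0 : 0 < C := by rw [hCdef]; positivity
  refine ⟨C, hC0, fun t d X Y ht hd hX hY => ?_⟩
  have hX0 : (0:ℝ) < X := lt_of_lt_of_le one_pos hX
  have hY0 : (0:ℝ) < Y := lt_of_lt_of_le one_pos hY
  set S₁ : ℝ := t ^ 2 / 8 + c₀ * (X ^ 2 + Y ^ 2) with hS₁def
  set S₂ : ℝ := t ^ 2 / 8 + c₀ * d ^ 2 with hS₂def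
  have hS₁ : 0 < S₁ := by rw [hS₁def]; positivity
  have hS₂ : 0 < S₂ := by rw [hS₂def]; positivity
  set Xv : ℝ := X ^ (-((m : ℝ) - 2)) with hXvdef
  set Yv : ℝ := Y ^ (-((m : ℝ) - 2)) with hYvdef
  have hXv : 0 < Xv := Real.rpow_pos_of_pos hX0 _
  have hYv : 0 < Yv := Real.rpow_pos_of_pos hY0 _
  set c₁ : ℝ := Xv * Yv * t ^ k with hc₁def
  set c₂ : ℝ := (t:ℝ) ^ k with hc₂def
  have hc₁0 : 0 ≤ c₁ := by rw [hc₁def]; positivity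
  have hc₂0 : 0 ≤ c₂ := by rw [hc₂def]; positivity
  -- pointwise identity on Ioi 0
  have hFG : ∀ v : ℝ, 0 < v →
      Real.exp (-(t ^ 2 / (8 * v))) * (t / Real.sqrt v) ^ k *
        (v ^ (-(n : ℝ) / 2) * Xv * Yv * Real.exp (-(c₀ * (X ^ 2 + Y ^ 2) / v)) +
          v ^ (-(m : ℝ) / 2) * Real.exp (-(c₀ * d ^ 2 / v))) / v =
      c₁ * (Real.exp (-(S₁ / v)) * v ^ (-p₁ - 1)) +
        c₂ * (Real.exp (-(S₂ / v)) * v ^ (-p₂ - 1)) := by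
    intro v hv
    have h1 : (t / Real.sqrt v) ^ k = t ^ k / v ^ ((k:ℝ)/2) := by
      rw [div_pow, Real.sqrt_eq_rpow, ← Real.rpow_natCast (v ^ (1/2:ℝ)) k,
        ← Real.rpow_mul hv.le, show (1/2 : ℝ) * (k:ℝ) = (k:ℝ)/2 from by ring]
    have e1 : Real.exp (-(t ^ 2 / (8 * v))) * Real.exp (-(c₀ * (X ^ 2 + Y ^ 2) / v)) =
        Real.exp (-(S₁ / v)) := by
      rw [← Real.exp_add]; congr 1; rw [hS₁def]; field_simp; ring
    have e2 : Real.exp (-(t ^ 2 / (8 * v))) * Real.exp (-(c₀ * d ^ 2 / v)) =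
        Real.exp (-(S₂ / v)) := by
      rw [← Real.exp_add]; congr 1; rw [hS₂def]; field_simp; ring
    have r0 : ∀ a b : ℝ, v ^ a / v ^ ((k:ℝ)/2) / v = v ^ b → True := fun _ _ _ => trivial
    have r1 : v ^ (-(n : ℝ) / 2) / v ^ ((k:ℝ)/2) / v = v ^ (-p₁ - 1) := by
      have : v ^ (-(n : ℝ) / 2) / v ^ ((k:ℝ)/2) / v
          = v ^ (-(n : ℝ) / 2) * (v ^ ((k:ℝ)/2))⁻¹ * (v ^ (1:ℝ))⁻¹ := by
        rw [Real.rpow_one]; ring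
      rw [this, ← Real.rpow_neg hv.le, ← Real.rpow_neg hv.le, ← Real.rpow_add hv,
        ← Real.rpow_add hv]
      congr 1
      rw [hp₁def]; ring
    have r2 : v ^ (-(m : ℝ) / 2) / v ^ ((k:ℝ)/2) / v = v ^ (-p₂ - 1) := by
      have : v ^ (-(m : ℝ) / 2) / v ^ ((k:ℝ)/2) / v
          = v ^ (-(m : ℝ) / 2) * (v ^ ((k:ℝ)/2))⁻¹ * (v ^ (1:ℝ))⁻¹ := by
        rw [Real.rpow_one]; ring
      rw [this, ← Real.rpow_neg hv.le, ← Real.rpow_neg hv.le, ← Real.rpow_add hv,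
        ← Real.rpow_add hv]
      congr 1
      rw [hp₂def]; ring
    calc Real.exp (-(t ^ 2 / (8 * v))) * (t / Real.sqrt v) ^ k *
        (v ^ (-(n : ℝ) / 2) * Xv * Yv * Real.exp (-(c₀ * (X ^ 2 + Y ^ 2) / v)) +
          v ^ (-(m : ℝ) / 2) * Real.exp (-(c₀ * d ^ 2 / v))) / v
        = (Xv * Yv * t ^ k) *
            ((Real.exp (-(t ^ 2 / (8 * v))) * Real.exp (-(c₀ * (X ^ 2 + Y ^ 2) / v))) *
              (v ^ (-(n : ℝ) / 2) / v ^ ((k:ℝ)/2) / v)) +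
          t ^ k * ((Real.exp (-(t ^ 2 / (8 * v))) * Real.exp (-(c₀ * d ^ 2 / v))) *
              (v ^ (-(m : ℝ) / 2) / v ^ ((k:ℝ)/2) / v)) := by
          rw [h1]; ring
      _ = c₁ * (Real.exp (-(S₁ / v)) * v ^ (-p₁ - 1)) +
            c₂ * (Real.exp (-(S₂ / v)) * v ^ (-p₂ - 1)) := by
          rw [e1, e2, r1, r2, hc₁def, hc₂def]
  -- measurability
  have hmeas : ∀ S p : ℝ,
      Measurable fun v : ℝ => ENNReal.ofReal (Real.exp (-(S / v)) * v ^ (-p - 1)) := by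
    intro S p
    apply Measurable.ennreal_ofReal
    fun_prop
  -- the main chain
  calc ∫⁻ v in Set.Ioi (1 : ℝ),
          ENNReal.ofReal (Real.exp (-(t ^ 2 / (8 * v))) * (t / Real.sqrt v) ^ k *
            (v ^ (-(n : ℝ) / 2) * Xv * Yv * Real.exp (-(c₀ * (X ^ 2 + Y ^ 2) / v)) +
              v ^ (-(m : ℝ) / 2) * Real.exp (-(c₀ * d ^ 2 / v))) / v)
      = ∫⁻ v in Set.Ioi (1 : ℝ),
          ENNReal.ofReal (c₁ * (Real.exp (-(S₁ / v)) * v ^ (-p₁ - 1)) +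
            c₂ * (Real.exp (-(S₂ / v)) * v ^ (-p₂ - 1))) := by
        refine setLIntegral_congr_fun measurableSet_Ioi (
          fun v hv => ?_)
        rw [hFG v (lt_trans one_pos hv)]
    _ ≤ ∫⁻ v in Set.Ioi (0 : ℝ),
          ENNReal.ofReal (c₁ * (Real.exp (-(S₁ / v)) * v ^ (-p₁ - 1)) +
            c₂ * (Real.exp (-(S₂ / v)) * v ^ (-p₂ - 1))) :=
        lintegral_mono_set (Set.Ioi_subset_Ioi zero_le_one)
    _ = ∫⁻ v in Set.Ioi (0 : ℝ),
          (ENNReal.ofReal c₁ * ENNReal.ofReal (Real.exp (-(S₁ / v)) * v ^ (-p₁ - 1)) +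
            ENNReal.ofReal c₂ * ENNReal.ofReal (Real.exp (-(S₂ / v)) * v ^ (-p₂ - 1))) := by
        refine setLIntegral_congr_fun measurableSet_Ioi (
          fun v hv => ?_)
        have hv0 : (0:ℝ) < v := hv
        rw [ENNReal.ofReal_add (by positivity) (by positivity),
          ENNReal.ofReal_mul hc₁0, ENNReal.ofReal_mul hc₂0]
    _ = ENNReal.ofReal c₁ *
          (∫⁻ v in Set.Ioi (0 : ℝ), ENNReal.ofReal (Real.exp (-(S₁ / v)) * v ^ (-p₁ - 1))) +
        ENNReal.ofReal c₂ *
          (∫⁻ v in Set.Ioi (0 : ℝ), ENNReal.ofReal (Real.exp (-(S₂ / v)) * v ^ (-p₂ - 1))) := by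
        rw [lintegral_add_left (((hmeas S₁ p₁).const_mul _))]
        rw [lintegral_const_mul' _ _ ENNReal.ofReal_ne_top,
          lintegral_const_mul' _ _ ENNReal.ofReal_ne_top]
    _ = ENNReal.ofReal (c₁ * ((1 / S₁) ^ p₁ * Real.Gamma p₁) +
          c₂ * ((1 / S₂) ^ p₂ * Real.Gamma p₂)) := by
        rw [aux_lintegral p₁ S₁ hp₁ hS₁, aux_lintegral p₂ S₂ hp₂ hS₂,
          ← ENNReal.ofReal_mul hc₁0, ← ENNReal.ofReal_mul hc₂0,
          ← ENNReal.ofReal_add (by positivity) (by positivity)]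
    _ ≤ ENNReal.ofReal (C * t ^ (-(n : ℝ)) * Xv * Yv * (t / (t + X + Y)) ^ (n + k) +
          C * t ^ (-(m : ℝ)) * (t / (t + d)) ^ (m + k)) := by
        apply ENNReal.ofReal_le_ofReal
        have hB : (0:ℝ) < t + X + Y := by linarith
        have hD : (0:ℝ) < t + d := by linarith
        have ht1 : t ^ (-(n:ℝ)) * t ^ (n + k) = t ^ k := by
          rw [← Real.rpow_natCast t (n + k), ← Real.rpow_natCast t k, ← Real.rpow_add ht]
          congr 1; push_cast; ring
        have ht2 : t ^ (-(m:ℝ)) * t ^ (m + k) = t ^ k := by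
          rw [← Real.rpow_natCast t (m + k), ← Real.rpow_natCast t k, ← Real.rpow_add ht]
          congr 1; push_cast; ring
        have heq1 : ((t + X + Y) ^ 2) ^ p₁ = (t + X + Y) ^ (n + k) := by
          rw [← Real.rpow_natCast (t + X + Y) 2, ← Real.rpow_mul hB.le,
            show (2:ℕ) * p₁ = ((n + k : ℕ) : ℝ) from by rw [hp₁def]; push_cast; ring,
            Real.rpow_natCast]
        have heq2 : ((t + d) ^ 2) ^ p₂ = (t + d) ^ (m + k) := by
          rw [← Real.rpow_natCast (t + d) 2, ← Real.rpow_mul hD.le,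
            show (2:ℕ) * p₂ = ((m + k : ℕ) : ℝ) from by rw [hp₂def]; push_cast; ring,
            Real.rpow_natCast]
        have hCge1 : Real.Gamma p₁ * K ^ p₁ ≤ C := by
          have h2 : (0:ℝ) < Real.Gamma p₂ * K ^ p₂ := by positivity
          rw [hCdef]; linarith
        have hCge2 : Real.Gamma p₂ * K ^ p₂ ≤ C := by
          have h2 : (0:ℝ) < Real.Gamma p₁ * K ^ p₁ := by positivity
          rw [hCdef]; linarith
        have hR1 : C * t ^ (-(n : ℝ)) * Xv * Yv * (t / (t + X + Y)) ^ (n + k) =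
            Xv * Yv * t ^ k * (C / (t + X + Y) ^ (n + k)) := by
          rw [div_pow]
          calc C * t ^ (-(n:ℝ)) * Xv * Yv * (t ^ (n+k) / (t + X + Y) ^ (n+k))
              = (t ^ (-(n:ℝ)) * t ^ (n+k)) * (Xv * Yv * (C / (t + X + Y) ^ (n+k))) := by ring
            _ = _ := by rw [ht1]; ring
        have hR2 : C * t ^ (-(m : ℝ)) * (t / (t + d)) ^ (m + k) =
            t ^ k * (C / (t + d) ^ (m + k)) := by
          rw [div_pow]
          calc C * t ^ (-(m:ℝ)) * (t ^ (m+k) / (t + d) ^ (m+k))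
              = (t ^ (-(m:ℝ)) * t ^ (m+k)) * (C / (t + d) ^ (m+k)) := by ring
            _ = _ := by rw [ht2]
        have hMt : 8 * t ^ 2 ≤ M * t ^ 2 := mul_le_mul_of_nonneg_right hM8 (sq_nonneg t)
        have hKS1 : (t + X + Y) ^ 2 ≤ K * S₁ := by
          rw [hKdef, hS₁def]
          have hb : 1 * (X ^ 2 + Y ^ 2) ≤ (M * c₀) * (X ^ 2 + Y ^ 2) :=
            mul_le_mul_of_nonneg_right h1c (by positivity)
          have hc : (t + X + Y) ^ 2 ≤ 3 * t ^ 2 + 3 * (X ^ 2 + Y ^ 2) := by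
            linarith [sq_nonneg (t - X), sq_nonneg (t - Y), sq_nonneg (X - Y)]
          have hexp : 3 * M * (t ^ 2 / 8 + c₀ * (X ^ 2 + Y ^ 2)) =
              (3 / 8) * (M * t ^ 2) + 3 * ((M * c₀) * (X ^ 2 + Y ^ 2)) := by ring
          rw [hexp]
          linarith
        have hKS2 : (t + d) ^ 2 ≤ K * S₂ := by
          rw [hKdef, hS₂def]
          have hb : 1 * d ^ 2 ≤ (M * c₀) * d ^ 2 :=
            mul_le_mul_of_nonneg_right h1c (sq_nonneg d)
          have hc : (t + d) ^ 2 ≤ 3 * t ^ 2 + 3 * d ^ 2 := by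
            linarith [sq_nonneg (t - d), sq_nonneg t, sq_nonneg d]
          have hexp : 3 * M * (t ^ 2 / 8 + c₀ * d ^ 2) =
              (3 / 8) * (M * t ^ 2) + 3 * ((M * c₀) * d ^ 2) := by ring
          rw [hexp]
          linarith
        have h1 : (1 / S₁) ^ p₁ ≤ K ^ p₁ / (t + X + Y) ^ (n + k) := by
          calc (1 / S₁) ^ p₁ ≤ (K / (t + X + Y) ^ 2) ^ p₁ := by
                refine Real.rpow_le_rpow (by positivity) ?_ hp₁.le
                rw [div_le_div_iff₀ hS₁ (by positivity)]
                linarith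
            _ = K ^ p₁ / ((t + X + Y) ^ 2) ^ p₁ := by
                rw [Real.div_rpow hK0.le (by positivity)]
            _ = K ^ p₁ / (t + X + Y) ^ (n + k) := by rw [heq1]
        have h2 : (1 / S₂) ^ p₂ ≤ K ^ p₂ / (t + d) ^ (m + k) := by
          calc (1 / S₂) ^ p₂ ≤ (K / (t + d) ^ 2) ^ p₂ := by
                refine Real.rpow_le_rpow (by positivity) ?_ hp₂.le
                rw [div_le_div_iff₀ hS₂ (by positivity)]
                linarith
            _ = K ^ p₂ / ((t + d) ^ 2) ^ p₂ := by
                rw [Real.div_rpow hK0.le (by positivity)]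
            _ = K ^ p₂ / (t + d) ^ (m + k) := by rw [heq2]
        have hterm1 : c₁ * ((1 / S₁) ^ p₁ * Real.Gamma p₁) ≤
            C * t ^ (-(n : ℝ)) * Xv * Yv * (t / (t + X + Y)) ^ (n + k) := by
          calc c₁ * ((1 / S₁) ^ p₁ * Real.Gamma p₁)
              ≤ c₁ * ((K ^ p₁ / (t + X + Y) ^ (n + k)) * Real.Gamma p₁) := by
                gcongr
            _ = c₁ * ((Real.Gamma p₁ * K ^ p₁) / (t + X + Y) ^ (n + k)) := by ring
            _ ≤ c₁ * (C / (t + X + Y) ^ (n + k)) := by gcongr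
            _ = C * t ^ (-(n : ℝ)) * Xv * Yv * (t / (t + X + Y)) ^ (n + k) := by
                rw [hc₁def, hR1]
        have hterm2 : c₂ * ((1 / S₂) ^ p₂ * Real.Gamma p₂) ≤
            C * t ^ (-(m : ℝ)) * (t / (t + d)) ^ (m + k) := by
          calc c₂ * ((1 / S₂) ^ p₂ * Real.Gamma p₂)
              ≤ c₂ * ((K ^ p₂ / (t + d) ^ (m + k)) * Real.Gamma p₂) := by
                gcongr
            _ = c₂ * ((Real.Gamma p₂ * K ^ p₂) / (t + d) ^ (m + k)) := by ring
            _ ≤ c₂ * (C / (t + d) ^ (m + k)) := by gcongr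
            _ = C * t ^ (-(m : ℝ)) * (t / (t + d)) ^ (m + k) := by
                rw [hc₂def, hR2]
        exact add_le_add hterm1 hterm2
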